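/- arXiv:2308.10887 — 2 statements merged into one kernel-verified Lean document; each statement's English description precedes it below -/
import Mathlib

section
/- There is a constant C depending only on the dimension d such that for every cube Q = Q(c,ℓ) in R^d, the average log_Q of the function x ↦ log|x| over Q satisfies |log_Q − log(max(|c|, ℓ))| ≤ C. -/
open MeasureTheory Filter Set

noncomputable section

namespace TL

/-- Euclidean space `ℝ^d`. -/
abbrev Rd (d : ℕ) := EuclideanSpace ℝ (Fin d)

variable {d : ℕ}

/-- An axis-parallel cube in `ℝ^d` with center `c` and side length `len > 0`. -/
structure Cube (d : ℕ) where
  c : Rd d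
  len : ℝ
  len_pos : 0 < len

namespace Cube

/-- The set of points of the cube. -/
def set (Q : Cube d) : Set (Rd d) := {x | ∀ i, |x i - Q.c i| < Q.len / 2}

/-- The volume `ℓ^d` of a cube. -/
def vol (Q : Cube d) : ℝ := Q.len ^ d

/-- The cube dilated `α` times with respect to its center. -/
def dilate (Q : Cube d) (α : ℝ) (hα : 0 < α) : Cube d :=
  ⟨Q.c, α * Q.len, mul_pos hα Q.len_pos⟩

/-- The cube `2Q`. -/
def double (Q : Cube d) : Cube d := Q.dilate 2 two_pos

end Cube

/-- The average `f_Q` of `f` over the cube `Q`. -/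
def avg (Q : Cube d) (f : Rd d → ℝ) : ℝ := (Q.vol)⁻¹ * ∫ x in Q.set, f x

/-- The mean oscillation `‖f‖_Q = inf_b |Q|⁻¹ ∫_Q |f-b|`. -/
def osc (Q : Cube d) (f : Rd d → ℝ) : ℝ :=
  ⨅ b : ℝ, (Q.vol)⁻¹ * ∫ x in Q.set, |f x - b|

/-- The fixed unit cube `Q₀` centered at the origin. -/
def Q0 (d : ℕ) : Cube d := ⟨0, 1, one_pos⟩

/-- The `BMO` seminorm `sup_Q ‖f‖_Q`. -/
def bmoSeminorm (f : Rd d → ℝ) : ℝ := ⨆ Q : Cube d, osc Q f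

/-- Membership in `BMO(ℝ^d)`: local integrability together with finiteness of the seminorm. -/
def MemBMO (f : Rd d → ℝ) : Prop :=
  LocallyIntegrable f volume ∧ BddAbove (Set.range fun Q : Cube d => osc Q f)

/-- The `BMO` norm `‖f‖*_BMO = ‖f‖_BMO + |f_{Q₀}|`. -/
def bmoNorm (f : Rd d → ℝ) : ℝ := bmoSeminorm f + |avg (Q0 d) f|

/-- The side length `ℓ̃` of the smallest axis-parallel cube `Q̃` containing `Q` and `Q₀`. -/
def tildeLen (Q : Cube d) : ℝ :=
  ⨆ i : Fin d, (max (Q.c i + Q.len / 2) (1 / 2) - min (Q.c i - Q.len / 2) (-(1 / 2)))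

/-- The log-distance function `L(Q) = log max(ℓ̃/ℓ, ℓ̃) + 1`. -/
def Lfun (Q : Cube d) : ℝ := Real.log (max (tildeLen Q / Q.len) (tildeLen Q)) + 1

/-- The `LMO` seminorm `sup_Q L(Q)·‖f‖_Q`. -/
def lmoSeminorm (f : Rd d → ℝ) : ℝ := ⨆ Q : Cube d, Lfun Q * osc Q f

/-- Membership in `LMO(ℝ^d)`. -/
def MemLMO (f : Rd d → ℝ) : Prop :=
  LocallyIntegrable f volume ∧ BddAbove (Set.range fun Q : Cube d => Lfun Q * osc Q f)

/-- A Calderón–Zygmund kernel on `ℝ^d` with regularity exponent `δ ∈ (0,1]`. -/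
structure CZKernel (d : ℕ) where
  K : Rd d → Rd d → ℝ
  C : ℝ
  δ : ℝ
  δ_pos : 0 < δ
  δ_le_one : δ ≤ 1
  meas : Measurable (Function.uncurry K)
  size : ∀ x y : Rd d, x ≠ y → |K x y| ≤ C * ‖x - y‖ ^ (-(d : ℝ))
  regularity : ∀ x₁ x₂ y : Rd d, x₁ ≠ y → 2 * ‖x₁ - x₂‖ ≤ ‖x₁ - y‖ →
    |K x₁ y - K x₂ y| ≤ C * ‖x₁ - x₂‖ ^ δ / ‖x₁ - y‖ ^ ((d : ℝ) + δ)

/-- A Calderón–Zygmund operator: a bounded linear operator on `L²(ℝ^d)` associated to a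
Calderón–Zygmund kernel, i.e. represented by integration against the kernel a.e. outside
the support of compactly supported `L²` functions. -/
structure CZOperator (d : ℕ) extends CZKernel d where
  T : Lp ℝ 2 (volume : Measure (Rd d)) →L[ℝ] Lp ℝ 2 (volume : Measure (Rd d))
  repr : ∀ f : Lp ℝ 2 (volume : Measure (Rd d)),
    HasCompactSupport (f : Rd d → ℝ) →
    ∀ᵐ x : Rd d, x ∉ tsupport (f : Rd d → ℝ) → (T f : Rd d → ℝ) x = ∫ y, K x y * f y

open Classical in
/-- The local part `∫_{2Q} K(x,y) g(y) dy` of `T_Q g`, interpreted in the `L²` sense: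
`T` applied to `g·χ_{2Q}` (and junk value `0` if `g·χ_{2Q} ∉ L²`). -/
def TQloc (S : CZOperator d) (Q : Cube d) (g : Rd d → ℝ) : Rd d → ℝ :=
  fun x =>
    if h : MemLp (Q.double.set.indicator g) 2 (volume : Measure (Rd d)) then
      (S.T (MemLp.toLp _ h) : Rd d → ℝ) x
    else 0

/-- The tail part `∫_{ℝ^d∖2Q} (K(x,y)-K(c,y)) g(y) dy` of `T_Q g`. -/
def TQtail (S : CZOperator d) (Q : Cube d) (g : Rd d → ℝ) : Rd d → ℝ :=
  fun x => ∫ y in (Q.double.set)ᶜ, (S.K x y - S.K Q.c y) * g y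

/-- `T_Q g (x) = ∫_{2Q} K(x,y)g(y)dy + ∫_{ℝ^d∖2Q}(K(x,y)-K(c,y))g(y)dy` for `x ∈ Q`. -/
def TQ (S : CZOperator d) (Q : Cube d) (g : Rd d → ℝ) : Rd d → ℝ :=
  fun x => TQloc S Q g x + TQtail S Q g x

/-- `T_Q 1`, where `1` is the constant function `χ_{ℝ^d}`. -/
def Tone (S : CZOperator d) (Q : Cube d) : Rd d → ℝ := TQ S Q (fun _ => 1)

/-- For `f ∈ BMO`, `T_Q f = f_{2Q}·T_Q1 + T_Q(f - f_{2Q})`. -/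
def TQbmo (S : CZOperator d) (Q : Cube d) (f : Rd d → ℝ) : Rd d → ℝ :=
  fun x => avg Q.double f * Tone S Q x + TQ S Q (fun y => f y - avg Q.double f) x

/-- The seminorm `‖Tf‖_BMO = sup_Q ‖T_Q f‖_Q` for `f ∈ BMO`. -/
def TbmoSeminorm (S : CZOperator d) (f : Rd d → ℝ) : ℝ :=
  ⨆ Q : Cube d, osc Q (TQbmo S Q f)

/-- The function `log|x|`. -/
def logAbs : Rd d → ℝ := fun x => Real.log ‖x‖

/-- The function `log_{s,-s}(x) = log|x-s| - log|x+s|`. -/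
def logss (s : Rd d) : Rd d → ℝ := fun x => Real.log ‖x - s‖ - Real.log ‖x + s‖

open Metric Pointwise

section Aux

lemma measurable_logAbs : Measurable (logAbs (d := d)) :=
  Real.measurable_log.comp measurable_norm

lemma cube_measurableSet (Q : Cube d) : MeasurableSet Q.set := by
  have h : Q.set = ⋂ i, {x : Rd d | |x i - Q.c i| < Q.len / 2} := by
    ext x; simp [Cube.set, Set.mem_iInter]
  rw [h]
  refine MeasurableSet.iInter fun i => ?_
  have hm : Measurable fun x : Rd d => |x i - Q.c i| :=
    (((EuclideanSpace.proj (𝕜 := ℝ) i).continuous.measurable).sub measurable_const).abs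
  exact measurableSet_lt hm measurable_const

lemma cube_volume (Q : Cube d) : volume Q.set = ENNReal.ofReal (Q.len ^ d) := by
  have hset : Q.set = (MeasurableEquiv.toLp 2 (Fin d → ℝ)).symm ⁻¹'
      (Set.univ.pi fun i => Ioo (Q.c i - Q.len / 2) (Q.c i + Q.len / 2)) := by
    ext x
    simp only [Cube.set, Set.mem_setOf_eq, Set.mem_preimage, Set.mem_pi, Set.mem_univ,
      forall_true_left, Set.mem_Ioo, MeasurableEquiv.toLp_symm_apply]
    constructor
    · intro h i
      have := h i; rw [abs_lt] at this
      exact ⟨by linarith [this.1], by linarith [this.2]⟩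
    · intro h i
      rw [abs_lt]
      exact ⟨by linarith [(h i).1], by linarith [(h i).2]⟩
  rw [hset, (EuclideanSpace.volume_preserving_symm_measurableEquiv_toLp (Fin d)).measure_preimage
      (MeasurableSet.univ_pi (fun i => measurableSet_Ioo)).nullMeasurableSet, volume_pi_pi]
  have h1 : ∀ i : Fin d, volume (Ioo (Q.c i - Q.len / 2) (Q.c i + Q.len / 2))
      = ENNReal.ofReal Q.len := by
    intro i; rw [Real.volume_Ioo]; ring_nf
  rw [Finset.prod_congr rfl fun i _ => h1 i, Finset.prod_const]
  simp [ENNReal.ofReal_pow Q.len_pos.le]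

lemma cube_volume_toReal (Q : Cube d) : (volume Q.set).toReal = Q.len ^ d := by
  rw [cube_volume]; exact ENNReal.toReal_ofReal (pow_nonneg Q.len_pos.le d)

lemma cube_volume_lt_top (Q : Cube d) : volume Q.set < ⊤ := by
  rw [cube_volume]; exact ENNReal.ofReal_lt_top

lemma cube_norm_sub_le {Q : Cube d} {x : Rd d} (hx : x ∈ Q.set) :
    ‖x - Q.c‖ ≤ Real.sqrt d * (Q.len / 2) := by
  rw [EuclideanSpace.norm_eq]
  have h1 : ∑ i, ‖(x - Q.c) i‖ ^ 2 ≤ (d : ℝ) * (Q.len / 2) ^ 2 := by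
    calc ∑ i, ‖(x - Q.c) i‖ ^ 2 ≤ ∑ _i : Fin d, (Q.len / 2) ^ 2 := by
          refine Finset.sum_le_sum fun i _ => ?_
          have h2 : ‖(x - Q.c) i‖ = |x i - Q.c i| := by
            simp [Real.norm_eq_abs]
          rw [h2]
          exact pow_le_pow_left₀ (abs_nonneg _) (le_of_lt (hx i)) 2
      _ = (d : ℝ) * (Q.len / 2) ^ 2 := by
          simp [Finset.sum_const, Finset.card_univ]
  calc Real.sqrt (∑ i, ‖(x - Q.c) i‖ ^ 2) ≤ Real.sqrt ((d : ℝ) * (Q.len / 2) ^ 2) :=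
        Real.sqrt_le_sqrt h1
    _ = Real.sqrt d * (Q.len / 2) := by
        rw [Real.sqrt_mul (Nat.cast_nonneg d), Real.sqrt_sq (div_nonneg Q.len_pos.le (by norm_num))]

lemma cube_norm_le {Q : Cube d} {x : Rd d} (hx : x ∈ Q.set) :
    ‖x‖ ≤ ‖Q.c‖ + Real.sqrt d * (Q.len / 2) := by
  have h := cube_norm_sub_le hx
  have h2 : ‖x‖ ≤ ‖x - Q.c‖ + ‖Q.c‖ := by
    simpa using norm_add_le (x - Q.c) Q.c
  linarith

lemma integrableOn_logAbs_ball (hd : 0 < d) {R : ℝ} (hR : 1 ≤ R) :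
    IntegrableOn (logAbs (d := d)) (ball 0 R) := by
  have : Nonempty (Fin d) := ⟨⟨0, hd⟩⟩
  have hm : AEStronglyMeasurable (logAbs (d := d)) (volume) :=
    measurable_logAbs.aestronglyMeasurable
  have hA : IntegrableOn (logAbs (d := d)) (ball 0 1) := by
    refine ⟨hm.restrict, ?_⟩
    rw [hasFiniteIntegral_iff_norm]
    set μ := volume.restrict (ball (0 : Rd d) 1) with hμ
    have key := lintegral_eq_lintegral_meas_lt μ
      (f := fun x => |logAbs x|) (Eventually.of_forall fun x => abs_nonneg _)
      measurable_logAbs.abs.aemeasurable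
    have hnorm : ∀ x : Rd d, ENNReal.ofReal ‖logAbs x‖ = ENNReal.ofReal |logAbs x| := by
      intro x; rw [Real.norm_eq_abs]
    calc ∫⁻ x, ENNReal.ofReal ‖logAbs x‖ ∂μ
        = ∫⁻ x, ENNReal.ofReal |logAbs x| ∂μ := by simp_rw [hnorm]
      _ = ∫⁻ t in Ioi (0:ℝ), μ {a : Rd d | t < |logAbs a|} := key
      _ ≤ ∫⁻ t in Ioi (0:ℝ),
            ENNReal.ofReal (Real.exp (-((d : ℝ) * t))) * volume (ball (0 : Rd d) 1) := by
          refine lintegral_mono_ae ((ae_restrict_iff' measurableSet_Ioi).2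
            (Eventually.of_forall fun t ht => ?_))
          have hms : MeasurableSet {a : Rd d | t < |logAbs a|} :=
            measurableSet_lt measurable_const measurable_logAbs.abs
          rw [hμ, Measure.restrict_apply hms]
          have hsub : {a : Rd d | t < |logAbs a|} ∩ ball 0 1 ⊆
              ball (0 : Rd d) (Real.exp (-t)) := by
            rintro a ⟨ha1, ha2⟩
            simp only [mem_ball, dist_zero_right] at ha2 ⊢
            rcases eq_or_lt_of_le (norm_nonneg a) with h0 | h0
            · rw [← h0]; exact Real.exp_pos _
            · have hlt : Real.log ‖a‖ < 0 := Real.log_neg h0 ha2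
              have ht1 : t < -(Real.log ‖a‖) := by
                have := ha1
                simp only [Set.mem_setOf_eq, logAbs] at this
                rwa [abs_of_neg hlt] at this
              have ht2 : Real.log ‖a‖ < -t := by linarith
              calc ‖a‖ = Real.exp (Real.log ‖a‖) := (Real.exp_log h0).symm
                _ < Real.exp (-t) := Real.exp_lt_exp.2 ht2
          calc volume ({a : Rd d | t < |logAbs a|} ∩ ball 0 1)
              ≤ volume (ball (0 : Rd d) (Real.exp (-t))) := measure_mono hsub
            _ = ENNReal.ofReal (Real.exp (-t) ^ Module.finrank ℝ (Rd d)) *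
                  volume (ball (0 : Rd d) 1) :=
                Measure.addHaar_ball volume 0 (Real.exp_nonneg _)
            _ = ENNReal.ofReal (Real.exp (-((d : ℝ) * t))) * volume (ball (0 : Rd d) 1) := by
                rw [finrank_euclideanSpace_fin, ← Real.exp_nat_mul]
                ring_nf
      _ = (∫⁻ t in Ioi (0:ℝ), ENNReal.ofReal (Real.exp (-((d : ℝ) * t)))) *
            volume (ball (0 : Rd d) 1) := by
          rw [lintegral_mul_const]
          exact (Real.measurable_exp.comp
            (measurable_const.mul measurable_id).neg).ennreal_ofReal
      _ < ⊤ := by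
          refine ENNReal.mul_lt_top ?_ measure_ball_lt_top
          have hi := (exp_neg_integrableOn_Ioi 0
            (show (0:ℝ) < d by exact_mod_cast hd)).hasFiniteIntegral
          rw [hasFiniteIntegral_iff_norm] at hi
          refine lt_of_eq_of_lt ?_ hi
          refine lintegral_congr fun t => ?_
          rw [Real.norm_eq_abs, abs_of_nonneg (Real.exp_nonneg _), neg_mul]
  have hB : IntegrableOn (logAbs (d := d)) (ball 0 R \ ball 0 1) := by
    refine Measure.integrableOn_of_bounded (M := Real.log R)
      (((measure_mono diff_subset).trans_lt measure_ball_lt_top).ne) hm ?_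
    refine (ae_restrict_iff' (measurableSet_ball.diff measurableSet_ball)).2
      (Eventually.of_forall ?_)
    rintro x ⟨hx1, hx2⟩
    simp only [mem_ball, dist_zero_right, not_lt] at hx1 hx2
    have hx0 : (1:ℝ) ≤ ‖x‖ := hx2
    have h1 : 0 ≤ Real.log ‖x‖ := Real.log_nonneg hx0
    have h2 : Real.log ‖x‖ ≤ Real.log R :=
      Real.log_le_log (lt_of_lt_of_le one_pos hx0) hx1.le
    show ‖logAbs x‖ ≤ Real.log R
    simp only [logAbs, Real.norm_eq_abs]
    rw [abs_of_nonneg h1]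
    exact h2
  refine (hA.union hB).mono_set fun x hx => ?_
  by_cases h : x ∈ ball (0 : Rd d) 1
  · exact Or.inl h
  · exact Or.inr ⟨hx, h⟩

lemma cube_smul_set (Q : Cube d) :
    Q.len • (Cube.mk (Q.len⁻¹ • Q.c) 1 one_pos : Cube d).set = Q.set := by
  have hl := Q.len_pos
  ext x
  rw [mem_smul_set_iff_inv_smul_mem₀ hl.ne']
  simp only [Cube.set, Set.mem_setOf_eq, PiLp.smul_apply, smul_eq_mul]
  have key : ∀ a : ℝ, (|Q.len⁻¹ * a| < 1 / 2 ↔ |a| < Q.len / 2) := by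
    intro a
    rw [abs_mul, abs_of_nonneg (inv_nonneg.2 hl.le), inv_mul_lt_iff₀ hl]
    constructor <;> intro <;> linarith
  constructor
  · intro h i
    have := h i
    rw [← mul_sub, key] at this
    exact this
  · intro h i
    rw [← mul_sub, key]
    exact h i

end Aux

/-- There is a dimensional constant `C` such that for every cube `Q = Q(c,ℓ)` in `ℝ^d`,
the average `log_Q` of `log|x|` over `Q` satisfies `|log_Q - log max(|c|, ℓ)| ≤ C`. -/
theorem statement_9 {d : ℕ} (hd : 0 < d) :
    ∃ C : ℝ, ∀ Q : Cube d, |avg Q logAbs - Real.log (max ‖Q.c‖ Q.len)| ≤ C := by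
  classical
  have hne : Nonempty (Fin d) := ⟨⟨0, hd⟩⟩
  set K : ℝ := Real.sqrt d with hK
  have hK1 : 1 ≤ K := by
    rw [hK, show (1:ℝ) = Real.sqrt 1 by simp]
    exact Real.sqrt_le_sqrt (by exact_mod_cast hd)
  have hK0 : 0 < K := lt_of_lt_of_le one_pos hK1
  have hIball : IntegrableOn (logAbs (d := d)) (Metric.ball 0 (2 * K)) :=
    integrableOn_logAbs_ball hd (by linarith)
  set M : ℝ := ∫ x in Metric.ball (0 : Rd d) (2 * K), |logAbs x| with hM
  have hM0 : 0 ≤ M := setIntegral_nonneg measurableSet_ball fun x _ => abs_nonneg _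
  have hlog2 : 0 ≤ Real.log 2 := Real.log_nonneg one_le_two
  have hlogK : 0 ≤ Real.log K := Real.log_nonneg hK1
  refine ⟨Real.log 2 + (Real.log K + M), fun Q => ?_⟩
  have hl := Q.len_pos
  have hld : (0:ℝ) < Q.len ^ d := by positivity
  have hvol : Q.vol = Q.len ^ d := rfl
  -- integrability on the cube
  have hIQ : IntegrableOn (logAbs (d := d)) Q.set := by
    refine (integrableOn_logAbs_ball hd
      (le_max_left 1 (‖Q.c‖ + K * Q.len))).mono_set fun x hx => ?_
    have h1 := cube_norm_le hx
    have h2 : ‖x‖ < ‖Q.c‖ + K * Q.len := by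
      have : K * (Q.len / 2) < K * Q.len := by nlinarith
      linarith
    simp only [Metric.mem_ball, dist_zero_right]
    exact lt_of_lt_of_le h2 (le_max_right _ _)
  by_cases hcase : ‖Q.c‖ ≤ K * Q.len
  · -- the cube is close to the origin: rescale to a unit cube
    set Q' : Cube d := ⟨Q.len⁻¹ • Q.c, 1, one_pos⟩ with hQ'
    have hc' : ‖Q'.c‖ ≤ K := by
      show ‖Q.len⁻¹ • Q.c‖ ≤ K
      rw [norm_smul, Real.norm_eq_abs, abs_of_nonneg (inv_nonneg.2 hl.le)]
      rw [inv_mul_le_iff₀ hl]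
      calc ‖Q.c‖ ≤ K * Q.len := hcase
        _ = Q.len * K := by ring
    have hsub' : Q'.set ⊆ Metric.ball (0 : Rd d) (2 * K) := by
      intro x hx
      have h1 := cube_norm_le (Q := Q') hx
      have h2 : Q'.len = 1 := rfl
      rw [h2] at h1
      simp only [Metric.mem_ball, dist_zero_right]
      have : ‖x‖ ≤ K + K * (1 / 2) := by
        calc ‖x‖ ≤ ‖Q'.c‖ + K * (1 / 2) := h1
          _ ≤ K + K * (1 / 2) := by linarith
      nlinarith
    have hIQ' : IntegrableOn (logAbs (d := d)) Q'.set := hIball.mono_set hsub'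
    set I : ℝ := ∫ y in Q'.set, logAbs y with hI
    have hIabs : |I| ≤ M := by
      have h1 : |I| ≤ ∫ y in Q'.set, |logAbs y| := by
        rw [hI]
        calc |∫ y in Q'.set, logAbs y| = ‖∫ y in Q'.set, logAbs y‖ := (Real.norm_eq_abs _).symm
          _ ≤ ∫ y in Q'.set, ‖logAbs y‖ := norm_integral_le_integral_norm _
          _ = ∫ y in Q'.set, |logAbs y| := by simp_rw [Real.norm_eq_abs]
      refine h1.trans ?_
      rw [hM]
      refine setIntegral_mono_set hIball.abs
        (Eventually.of_forall fun x => abs_nonneg _) (HasSubset.Subset.eventuallyLE hsub')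
    -- scaling identity
    have h0 := Measure.setIntegral_comp_smul_of_pos volume (logAbs (d := d)) Q'.set hl
    rw [finrank_euclideanSpace_fin] at h0
    rw [show Q.len • Q'.set = Q.set from cube_smul_set Q] at h0
    have hae : ∫ x in Q'.set, logAbs (Q.len • x) =
        ∫ x in Q'.set, (Real.log Q.len + logAbs x) := by
      refine setIntegral_congr_ae (cube_measurableSet Q') ?_
      have hnt : Nontrivial (Rd d) := inferInstance
      have h0' : ∀ᵐ x : Rd d ∂volume, x ≠ 0 := by
        rw [ae_iff]
        simpa using measure_singleton (0 : Rd d)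
      filter_upwards [h0'] with x hx _
      show Real.log ‖Q.len • x‖ = Real.log Q.len + Real.log ‖x‖
      rw [norm_smul, Real.norm_eq_abs, abs_of_pos hl,
        Real.log_mul hl.ne' (norm_ne_zero_iff.2 hx)]
    have hconst : IntegrableOn (fun _ : Rd d => Real.log Q.len) Q'.set :=
      integrableOn_const (cube_volume_lt_top Q').ne
    have hsplit : ∫ x in Q'.set, (Real.log Q.len + logAbs x) = Real.log Q.len + I := by
      rw [integral_add hconst hIQ', setIntegral_const, measureReal_def, cube_volume_toReal]
      have : Q'.len = 1 := rfl
      rw [this]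
      simp [hI]
    rw [hae, hsplit] at h0
    -- h0 : log ℓ + I = (ℓ^d)⁻¹ • ∫_{Q.set} logAbs
    have havg : avg Q logAbs = Real.log Q.len + I := by
      show (Q.vol)⁻¹ * ∫ x in Q.set, logAbs x = Real.log Q.len + I
      rw [hvol, h0]
      simp [smul_eq_mul]
    rw [havg]
    -- bound on |log max - log ℓ|
    have hmax1 : Q.len ≤ max ‖Q.c‖ Q.len := le_max_right _ _
    have hmax2 : max ‖Q.c‖ Q.len ≤ K * Q.len := max_le hcase (by nlinarith)
    have hmaxpos : 0 < max ‖Q.c‖ Q.len := lt_of_lt_of_le hl hmax1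
    have hlog1 : Real.log Q.len ≤ Real.log (max ‖Q.c‖ Q.len) := Real.log_le_log hl hmax1
    have hlog2' : Real.log (max ‖Q.c‖ Q.len) ≤ Real.log K + Real.log Q.len := by
      calc Real.log (max ‖Q.c‖ Q.len) ≤ Real.log (K * Q.len) :=
            Real.log_le_log hmaxpos hmax2
        _ = Real.log K + Real.log Q.len := Real.log_mul hK0.ne' hl.ne'
    have habs := abs_le.1 hIabs
    rw [abs_le]
    constructor <;> [linarith [habs.1]; linarith [habs.2]]
  · -- the cube is far from the origin
    push_neg at hcase
    have hc0 : 0 < ‖Q.c‖ := lt_trans (by positivity) hcase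
    have hmax : max ‖Q.c‖ Q.len = ‖Q.c‖ :=
      max_eq_left (le_of_lt (lt_of_le_of_lt (by nlinarith) hcase))
    have hpt : ∀ x ∈ Q.set, ‖logAbs x - Real.log ‖Q.c‖‖ ≤ Real.log 2 := by
      intro x hx
      have h1 : ‖x - Q.c‖ ≤ ‖Q.c‖ / 2 := by
        have := cube_norm_sub_le hx
        have h2 : K * (Q.len / 2) ≤ ‖Q.c‖ / 2 := by nlinarith
        linarith
      have hlow : ‖Q.c‖ / 2 ≤ ‖x‖ := by
        have h4 : ‖Q.c‖ - ‖x‖ ≤ ‖x - Q.c‖ := by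
          have := norm_sub_norm_le Q.c x
          rwa [norm_sub_rev] at this
        linarith
      have hup : ‖x‖ ≤ 2 * ‖Q.c‖ := by
        have h4 : ‖x‖ - ‖Q.c‖ ≤ ‖x - Q.c‖ := norm_sub_norm_le x Q.c
        linarith
      have hx0 : 0 < ‖x‖ := lt_of_lt_of_le (by positivity) hlow
      have hub : Real.log ‖x‖ ≤ Real.log 2 + Real.log ‖Q.c‖ := by
        calc Real.log ‖x‖ ≤ Real.log (2 * ‖Q.c‖) := Real.log_le_log hx0 hup
          _ = Real.log 2 + Real.log ‖Q.c‖ := Real.log_mul two_ne_zero hc0.ne'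
      have hlb : Real.log ‖Q.c‖ - Real.log 2 ≤ Real.log ‖x‖ := by
        have h5 : Real.log (‖Q.c‖ / 2) ≤ Real.log ‖x‖ :=
          Real.log_le_log (by positivity) hlow
        rw [Real.log_div hc0.ne' two_ne_zero] at h5
        exact h5
      simp only [logAbs, Real.norm_eq_abs, abs_le]
      constructor <;> [linarith; linarith]
    have hconst : IntegrableOn (fun _ : Rd d => Real.log ‖Q.c‖) Q.set :=
      integrableOn_const (cube_volume_lt_top Q).ne
    have hbnd : ‖∫ x in Q.set, (logAbs x - Real.log ‖Q.c‖)‖ ≤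
        Real.log 2 * (volume Q.set).toReal := by
      refine norm_setIntegral_le_of_norm_le_const (cube_volume_lt_top Q) hpt
    rw [cube_volume_toReal] at hbnd
    have hsplit : ∫ x in Q.set, (logAbs x - Real.log ‖Q.c‖) =
        (∫ x in Q.set, logAbs x) - Q.len ^ d * Real.log ‖Q.c‖ := by
      rw [integral_sub hIQ hconst, setIntegral_const, measureReal_def, cube_volume_toReal, smul_eq_mul]
    have hdiff : avg Q logAbs - Real.log ‖Q.c‖ =
        (Q.len ^ d)⁻¹ * ∫ x in Q.set, (logAbs x - Real.log ‖Q.c‖) := by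
      rw [hsplit]
      show (Q.vol)⁻¹ * _ - _ = _
      rw [hvol]
      field_simp
    rw [hmax, hdiff]
    rw [abs_mul, abs_of_nonneg (inv_nonneg.2 hld.le)]
    calc (Q.len ^ d)⁻¹ * |∫ x in Q.set, (logAbs x - Real.log ‖Q.c‖)| ≤
          (Q.len ^ d)⁻¹ * (Real.log 2 * Q.len ^ d) := by
          refine mul_le_mul_of_nonneg_left ?_ (inv_nonneg.2 hld.le)
          rw [← Real.norm_eq_abs]
          exact hbnd
      _ = Real.log 2 := by field_simp
      _ ≤ Real.log 2 + (Real.log K + M) := by linarith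

end TL
end
end

section
/- Fix δ ∈ (0,1] and dimension d. There is a constant C such that for every cube Q in R^d, the sum over s ≥ 1 of 1/(2^{sδ}·L(2^{s+1}Q)) is at most C/L(Q). -/
open MeasureTheory Filter Set

noncomputable section

namespace TL

variable {d : ℕ}

lemma len_le_tildeLen {d : ℕ} (hd : 0 < d) (Q : Cube d) : Q.len ≤ tildeLen Q := by
  have hb : BddAbove (Set.range fun i : Fin d =>
      max (Q.c i + Q.len / 2) (1 / 2) - min (Q.c i - Q.len / 2) (-(1 / 2))) :=
    Set.Finite.bddAbove (Set.finite_range _)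
  refine le_trans ?_ (le_ciSup hb ⟨0, hd⟩)
  have h1 : Q.c ⟨0, hd⟩ + Q.len / 2 ≤ max (Q.c ⟨0, hd⟩ + Q.len / 2) (1/2) := le_max_left _ _
  have h2 : min (Q.c ⟨0, hd⟩ - Q.len / 2) (-(1/2)) ≤ Q.c ⟨0, hd⟩ - Q.len / 2 := min_le_left _ _
  linarith

lemma one_le_tildeLen {d : ℕ} (hd : 0 < d) (Q : Cube d) : 1 ≤ tildeLen Q := by
  have hb : BddAbove (Set.range fun i : Fin d =>
      max (Q.c i + Q.len / 2) (1 / 2) - min (Q.c i - Q.len / 2) (-(1 / 2))) :=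
    Set.Finite.bddAbove (Set.finite_range _)
  refine le_trans ?_ (le_ciSup hb ⟨0, hd⟩)
  have h1 : (1:ℝ)/2 ≤ max (Q.c ⟨0, hd⟩ + Q.len / 2) (1/2) := le_max_right _ _
  have h2 : min (Q.c ⟨0, hd⟩ - Q.len / 2) (-(1/2)) ≤ -(1/2 : ℝ) := min_le_right _ _
  linarith

lemma one_le_Lfun {d : ℕ} (hd : 0 < d) (Q : Cube d) : 1 ≤ Lfun Q := by
  have h1 := one_le_tildeLen hd Q
  have h2 : (0:ℝ) ≤ Real.log (max (tildeLen Q / Q.len) (tildeLen Q)) :=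
    Real.log_nonneg (le_trans h1 (le_max_right _ _))
  unfold Lfun; linarith

lemma Lfun_le_dilate {d : ℕ} (hd : 0 < d) (Q : Cube d) (lam : ℝ) (hlam : 1 ≤ lam)
    (h0 : 0 < lam) : Lfun Q ≤ Lfun (Q.dilate lam h0) + Real.log lam := by
  have hℓ : 0 < Q.len := Q.len_pos
  have ht : tildeLen Q ≤ tildeLen (Q.dilate lam h0) := by
    apply ciSup_mono (Set.Finite.bddAbove (Set.finite_range _))
    intro i
    show _ ≤ max (Q.c i + lam * Q.len / 2) (1/2) - min (Q.c i - lam * Q.len / 2) (-(1/2))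
    have hle : Q.len ≤ lam * Q.len := le_mul_of_one_le_left hℓ.le hlam
    exact sub_le_sub (max_le_max (by linarith) le_rfl) (min_le_min (by linarith) le_rfl)
  set t := tildeLen Q with htdef
  set t' := tildeLen (Q.dilate lam h0) with ht'def
  have h1 : 1 ≤ t := one_le_tildeLen hd Q
  set M := max (t / Q.len) t with hM
  set M' := max (t' / (lam * Q.len)) t' with hM'
  have hM'pos : 0 < M' := lt_of_lt_of_le (by linarith) (le_max_right _ _)
  have hMpos : 0 < M := lt_of_lt_of_le (by linarith) (le_max_right _ _)
  have key : M ≤ lam * M' := by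
    apply max_le
    · have e : lam * (t' / (lam * Q.len)) = t' / Q.len := by
        field_simp
      have : t / Q.len ≤ lam * (t' / (lam * Q.len)) := by
        rw [e]; gcongr
      refine this.trans ?_
      gcongr
      exact le_max_left _ _
    · have : t ≤ lam * t' := by nlinarith
      refine this.trans ?_
      gcongr
      exact le_max_right _ _
  have hlog : Real.log M ≤ Real.log lam + Real.log M' := by
    have := Real.log_le_log hMpos key
    rwa [Real.log_mul (ne_of_gt h0) (ne_of_gt hM'pos)] at this
  have hlen : (Q.dilate lam h0).len = lam * Q.len := rfl
  unfold Lfun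
  rw [hlen]
  rw [← htdef, ← ht'def, ← hM, ← hM']
  linarith

/-- For fixed `δ ∈ (0,1]` there is a constant `C` such that for every cube `Q` in `ℝ^d`,
`∑_{s≥1} 1/(2^{sδ} L(2^{s+1}Q)) ≤ C / L(Q)`. -/
theorem statement_16 {d : ℕ} (hd : 0 < d) (δ : ℝ) (hδ : 0 < δ) (hδ1 : δ ≤ 1) :
    ∃ C : ℝ, ∀ Q : Cube d,
      (∑' s : ℕ, 1 / ((2 : ℝ) ^ (((s : ℝ) + 1) * δ)
          * Lfun (Q.dilate ((2 : ℝ) ^ (s + 2)) (by positivity)))) ≤ C / Lfun Q := by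
  set g : ℕ → ℝ := fun s => ((s : ℝ) + 3) / (2 : ℝ) ^ (((s : ℝ) + 1) * δ) with hg
  -- summability of g
  have hq1 : (1:ℝ) < (2:ℝ) ^ δ := by
    rw [show (1:ℝ) = (2:ℝ) ^ (0:ℝ) by simp]
    exact Real.rpow_lt_rpow_left_iff (by norm_num) |>.mpr hδ
  set q : ℝ := ((2:ℝ) ^ δ)⁻¹ with hqdef
  have hq0 : 0 < q := by positivity
  have hqlt : q < 1 := by
    rw [hqdef, inv_lt_one_iff₀]; right; exact hq1
  have hqnorm : ‖q‖ < 1 := by rwa [Real.norm_eq_abs, abs_of_pos hq0]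
  have hrw : ∀ s : ℕ, g s = (((s : ℝ) + 3) * q ^ s) * q := by
    intro s
    have e1 : ((s : ℝ) + 1) * δ = δ * ((s + 1 : ℕ) : ℝ) := by push_cast; ring
    have e2 : (2:ℝ) ^ (((s : ℝ) + 1) * δ) = ((2:ℝ) ^ δ) ^ (s + 1) := by
      rw [e1, Real.rpow_mul (by norm_num), Real.rpow_natCast]
    rw [hg]
    simp only [e2, div_eq_mul_inv, ← inv_pow, pow_succ, mul_assoc]
    rw [hqdef, inv_pow, ← mul_inv]
  have hgsum : Summable g := by
    have ha : Summable fun s : ℕ => (s : ℝ) * q ^ s := by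
      simpa using summable_pow_mul_geometric_of_norm_lt_one 1 hqnorm
    have hb : Summable fun s : ℕ => (3:ℝ) * q ^ s :=
      (summable_geometric_of_lt_one hq0.le hqlt).mul_left 3
    have hc : Summable fun s : ℕ => ((s : ℝ) + 3) * q ^ s := by
      refine (ha.add hb).congr fun s => ?_
      ring
    exact (hc.mul_right q).congr fun s => (hrw s).symm
  refine ⟨∑' s, g s, fun Q => ?_⟩
  have hLQ : 1 ≤ Lfun Q := one_le_Lfun hd Q
  have hLQpos : 0 < Lfun Q := by linarith
  have hle : ∀ s : ℕ,
      1 / ((2 : ℝ) ^ (((s : ℝ) + 1) * δ)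
          * Lfun (Q.dilate ((2 : ℝ) ^ (s + 2)) (by positivity)))
        ≤ g s * (Lfun Q)⁻¹ := by
    intro s
    set Ls := Lfun (Q.dilate ((2 : ℝ) ^ (s + 2)) (by positivity)) with hLs
    have hLs1 : 1 ≤ Ls := one_le_Lfun hd _
    set P := (2 : ℝ) ^ (((s : ℝ) + 1) * δ) with hP
    have hPpos : 0 < P := by positivity
    have hlam1 : (1:ℝ) ≤ 2 ^ (s + 2) := one_le_pow₀ (by norm_num)
    have hdil := Lfun_le_dilate hd Q ((2:ℝ) ^ (s + 2)) hlam1 (by positivity)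
    have hlog : Real.log ((2:ℝ) ^ (s + 2)) = ((s:ℝ) + 2) * Real.log 2 := by
      rw [Real.log_pow]; push_cast; ring
    have hlog2 : Real.log 2 < 1 := by
      have := Real.log_two_lt_d9; linarith
    have hlog2' : 0 ≤ Real.log 2 := Real.log_nonneg (by norm_num)
    have hchain : Lfun Q ≤ Ls * ((s:ℝ) + 3) := by
      have h1 : Lfun Q ≤ Ls + ((s:ℝ) + 2) * Real.log 2 := by
        rw [hlog] at hdil; exact hdil
      nlinarith [mul_nonneg (sub_nonneg.2 hLs1) (mul_nonneg (by positivity : (0:ℝ) ≤ (s:ℝ) + 2) hlog2'),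
        mul_le_mul_of_nonneg_left (show ((s:ℝ)+2) * Real.log 2 ≤ (s:ℝ)+2 by nlinarith) (show (0:ℝ) ≤ Ls by linarith)]
    have hre : g s * (Lfun Q)⁻¹ = ((s:ℝ) + 3) / (P * Lfun Q) := by
      simp only [hg]
      rw [← hP]
      have : P ≠ 0 := ne_of_gt hPpos
      have : Lfun Q ≠ 0 := ne_of_gt hLQpos
      field_simp
    rw [hre, div_le_div_iff₀ (by positivity) (by positivity)]
    nlinarith [mul_le_mul_of_nonneg_left hchain hPpos.le]
  have hsum2 : Summable fun s : ℕ => g s * (Lfun Q)⁻¹ := hgsum.mul_right _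
  have hsum1 : Summable fun s : ℕ =>
      1 / ((2 : ℝ) ^ (((s : ℝ) + 1) * δ)
          * Lfun (Q.dilate ((2 : ℝ) ^ (s + 2)) (by positivity))) := by
    refine hsum2.of_nonneg_of_le (fun s => ?_) hle
    have h1 : (1:ℝ) ≤ Lfun (Q.dilate ((2 : ℝ) ^ (s + 2)) (by positivity)) := one_le_Lfun hd _
    have h2 : (0:ℝ) < (2 : ℝ) ^ (((s : ℝ) + 1) * δ) := by positivity
    positivity
  calc _ ≤ ∑' s : ℕ, g s * (Lfun Q)⁻¹ := Summable.tsum_le_tsum hle hsum1 hsum2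
    _ = (∑' s, g s) * (Lfun Q)⁻¹ := tsum_mul_right
    _ = (∑' s, g s) / Lfun Q := (div_eq_mul_inv _ _).symm

end TL
end
end
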